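/- Let g_H := h₁ + h₂ + h₃ where for integer ς ≥ 3: h₁(ς) = −2(2ς^{2H} + (ς−1)^{2H} + (ς+1)^{2H}), h₂(ς) = 8((ς+1)^{2H+1} − (ς−1)^{2H+1})/(2H+1), h₃(ς) = −8((ς+1)^{2H+2} − 2ς^{2H+2} + (ς−1)^{2H+2})/((2H+2)(2H+1)). Then for every H ∈ (0,1) there is a constant C such that |g_H(ς)| ≤ C ς^{2H−4} for all integers ς ≥ 3; in particular Σ_{ς=0}^{∞} |g_H(ς)| < ∞. -/

import Mathlib

noncomputable def h1 (H : ℝ) (ς : ℕ) : ℝ :=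
  -2 * (2 * (ς : ℝ) ^ (2 * H) + ((ς : ℝ) - 1) ^ (2 * H) + ((ς : ℝ) + 1) ^ (2 * H))

noncomputable def h2 (H : ℝ) (ς : ℕ) : ℝ :=
  8 * (((ς : ℝ) + 1) ^ (2 * H + 1) - ((ς : ℝ) - 1) ^ (2 * H + 1)) / (2 * H + 1)

noncomputable def h3 (H : ℝ) (ς : ℕ) : ℝ :=
  -8 * (((ς : ℝ) + 1) ^ (2 * H + 2) - 2 * (ς : ℝ) ^ (2 * H + 2)
      + ((ς : ℝ) - 1) ^ (2 * H + 2)) / ((2 * H + 2) * (2 * H + 1))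

noncomputable def gH (H : ℝ) (ς : ℕ) : ℝ := h1 H ς + h2 H ς + h3 H ς


noncomputable def tpoly (a : ℝ) (k : ℕ) (u : ℝ) : ℝ :=
  ∑ j ∈ Finset.range (k+1), (∏ i ∈ Finset.range j, (a - i)) / (Nat.factorial j) * u ^ j

lemma tpoly_zero (a : ℝ) (k : ℕ) : tpoly a k 0 = 1 := by
  induction k with
  | zero => simp [tpoly]
  | succ n ih =>
      rw [tpoly, Finset.sum_range_succ]
      simpa [tpoly] using ih

lemma tpoly_hasDerivAt (a : ℝ) (k : ℕ) (t : ℝ) :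
    HasDerivAt (fun u => tpoly a (k+1) u) (a * tpoly (a-1) k t) t := by
  have h : HasDerivAt (fun u => tpoly a (k+1) u)
      (∑ j ∈ Finset.range (k+2),
        (∏ i ∈ Finset.range j, (a - i)) / (Nat.factorial j) * (j * t ^ (j-1))) t := by
    apply HasDerivAt.fun_sum
    intro j _
    exact (hasDerivAt_pow j t).const_mul _
  convert h using 1
  rw [Finset.sum_range_succ']
  simp only [Nat.cast_zero, pow_zero, mul_zero, Nat.factorial_zero, zero_mul, add_zero,
    Nat.cast_one]
  rw [tpoly, Finset.mul_sum]
  apply Finset.sum_congr rfl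
  intro j _
  have hprod : (∏ i ∈ Finset.range (j+1), (a - i)) = (∏ i ∈ Finset.range j, (a - 1 - i)) * a := by
    rw [Finset.prod_range_succ']
    congr 1
    · apply Finset.prod_congr rfl
      intro i _
      push_cast
      ring
    · simp
  rw [hprod]
  have hfac : ((Nat.factorial (j+1) : ℝ)) = (j+1) * Nat.factorial j := by
    push_cast [Nat.factorial_succ]; ring
  rw [hfac]
  have h1 : (Nat.factorial j : ℝ) ≠ 0 := Nat.cast_ne_zero.mpr (Nat.factorial_ne_zero j)
  have h2 : ((j : ℝ) + 1) ≠ 0 := by positivity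
  simp only [Nat.add_sub_cancel, Nat.cast_add, Nat.cast_one]
  field_simp

lemma rpow_hasDerivAt (a t : ℝ) (ht : 0 < 1 + t) :
    HasDerivAt (fun u : ℝ => (1+u) ^ a) (a * (1+t) ^ (a-1)) t := by
  have h1 : HasDerivAt (fun u : ℝ => 1 + u) 1 t := (hasDerivAt_id t).const_add 1
  have h2 : HasDerivAt (fun x : ℝ => x ^ a) (a * (1+t) ^ (a-1)) (1+t) := by
    simpa [mul_comm] using Real.hasDerivAt_rpow_const (x := 1+t) (p := a) (Or.inl ht.ne')
  have h3 := h2.comp t h1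
  rw [mul_one] at h3
  exact h3

lemma taylor_bound (a : ℝ) (k : ℕ) :
    ∃ M : ℝ, 0 ≤ M ∧ ∀ u : ℝ, |u| ≤ 1/3 → |(1+u) ^ a - tpoly a k u| ≤ M * |u| ^ (k+1) := by
  induction k generalizing a with
  | zero =>
      have hc : ContinuousOn (fun t : ℝ => (1+t) ^ (a-1)) (Set.Icc (-(1/3) : ℝ) (1/3)) := by
        apply ContinuousOn.rpow_const
        · exact (continuous_const.add continuous_id).continuousOn
        · intro t ht
          left
          have : -(1/3 : ℝ) ≤ t := ht.1
          nlinarith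
      obtain ⟨M0, hM0⟩ := (isCompact_Icc).exists_bound_of_continuousOn hc
      refine ⟨|a| * M0, ?_, ?_⟩
      · have : (0:ℝ) ≤ M0 := le_trans (norm_nonneg _) (hM0 0 (by norm_num))
        positivity
      intro u hu
      have key : ∀ t ∈ Set.Icc (-(1/3):ℝ) (1/3), 0 < 1 + t := by
        intro t ht
        have := ht.1; nlinarith
      have hderiv : ∀ t ∈ Set.Icc (-(1/3):ℝ) (1/3),
          HasDerivWithinAt (fun u : ℝ => (1+u) ^ a - tpoly a 0 u)
            (a * (1+t) ^ (a-1)) (Set.Icc (-(1/3):ℝ) (1/3)) t := by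
        intro t ht
        have h1 := (rpow_hasDerivAt a t (key t ht))
        have h2 : HasDerivAt (fun u : ℝ => tpoly a 0 u) 0 t := by
          have : (fun u : ℝ => tpoly a 0 u) = fun _ => 1 := by
            funext u; simp [tpoly]
          rw [this]; exact hasDerivAt_const t 1
        have h3 := (h1.sub h2).hasDerivWithinAt (s := Set.Icc (-(1/3):ℝ) (1/3))
        rw [sub_zero] at h3
        exact h3
      have hbnd : ∀ t ∈ Set.Icc (-(1/3):ℝ) (1/3), ‖a * (1+t) ^ (a-1)‖ ≤ |a| * M0 := by
        intro t ht
        rw [norm_mul]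
        exact mul_le_mul_of_nonneg_left (hM0 t ht) (abs_nonneg a)
      have hu' : u ∈ Set.Icc (-(1/3):ℝ) (1/3) := by
        constructor <;> [linarith [neg_abs_le u]; linarith [le_abs_self u]]
      have h0 : (0:ℝ) ∈ Set.Icc (-(1/3):ℝ) (1/3) := by norm_num
      have := (convex_Icc (-(1/3):ℝ) (1/3)).norm_image_sub_le_of_norm_hasDerivWithin_le
        hderiv hbnd h0 hu'
      have hf0 : (1+(0:ℝ)) ^ a - tpoly a 0 0 = 0 := by
        simp [tpoly_zero, Real.one_rpow]
      rw [hf0, sub_zero] at this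
      simpa using this
  | succ k ih =>
      obtain ⟨M, hM0, hM⟩ := ih (a-1)
      refine ⟨|a| * M, by positivity, ?_⟩
      intro u hu
      have habs : ∀ t ∈ Set.uIcc (0:ℝ) u, |t| ≤ |u| := by
        intro t ht
        rw [Set.mem_uIcc] at ht
        rcases ht with ⟨h1, h2⟩ | ⟨h1, h2⟩
        · rw [abs_of_nonneg h1]; exact le_trans h2 (le_abs_self u)
        · rw [abs_of_nonpos h2]
          calc -t ≤ -u := neg_le_neg h1
            _ ≤ |u| := neg_le_abs u
      have hderiv : ∀ t ∈ Set.uIcc (0:ℝ) u,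
          HasDerivWithinAt (fun v : ℝ => (1+v) ^ a - tpoly a (k+1) v)
            (a * ((1+t) ^ (a-1) - tpoly (a-1) k t)) (Set.uIcc (0:ℝ) u) t := by
        intro t ht
        have hpos : 0 < 1 + t := by
          have := habs t ht
          have := abs_le.mp (le_trans this hu)
          linarith [this.1]
        have h1 := rpow_hasDerivAt a t hpos
        have h2 := tpoly_hasDerivAt a k t
        have := h1.sub h2
        rw [mul_sub]
        exact this.hasDerivWithinAt
      have hbnd : ∀ t ∈ Set.uIcc (0:ℝ) u,
          ‖a * ((1+t) ^ (a-1) - tpoly (a-1) k t)‖ ≤ |a| * (M * |u| ^ (k+1)) := by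
        intro t ht
        rw [norm_mul]
        apply mul_le_mul_of_nonneg_left _ (abs_nonneg a)
        calc ‖(1+t) ^ (a-1) - tpoly (a-1) k t‖ ≤ M * |t| ^ (k+1) :=
              hM t (le_trans (habs t ht) hu)
          _ ≤ M * |u| ^ (k+1) := by
              apply mul_le_mul_of_nonneg_left _ hM0
              exact pow_le_pow_left₀ (abs_nonneg t) (habs t ht) _
      have h0 : (0:ℝ) ∈ Set.uIcc 0 u := Set.left_mem_uIcc
      have hu' : u ∈ Set.uIcc (0:ℝ) u := Set.right_mem_uIcc
      have := (convex_uIcc (0:ℝ) u).norm_image_sub_le_of_norm_hasDerivWithin_le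
        hderiv hbnd h0 hu'
      have hf0 : (1+(0:ℝ)) ^ a - tpoly a (k+1) 0 = 0 := by
        simp [tpoly_zero, Real.one_rpow]
      rw [hf0, sub_zero] at this
      calc |(1+u) ^ a - tpoly a (k+1) u| ≤ |a| * (M * |u| ^ (k+1)) * ‖u - 0‖ := this
        _ = |a| * M * |u| ^ (k+1+1) := by
            rw [sub_zero, Real.norm_eq_abs]; ring

lemma keyE (p : ℝ) (hp : 0 < p) (u : ℝ) :
    u^2 * (-2*(2 + (1+(-u))^p + (1+u)^p))
      + u * (8*((1+u)^(p+1) - (1+(-u))^(p+1))/(p+1))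
      + (-8*((1+u)^(p+2) - 2 + (1+(-u))^(p+2))/((p+2)*(p+1)))
    = -2*u^2*(((1+u)^p - tpoly p 3 u) + ((1+(-u))^p - tpoly p 3 (-u)))
      + 8/(p+1)*u*(((1+u)^(p+1) - tpoly (p+1) 4 u) - ((1+(-u))^(p+1) - tpoly (p+1) 4 (-u)))
      - 8/((p+2)*(p+1))*(((1+u)^(p+2) - tpoly (p+2) 5 u) + ((1+(-u))^(p+2) - tpoly (p+2) 5 (-u))) := by
  have h1 : p + 1 ≠ 0 := by linarith
  have h2 : p + 2 ≠ 0 := by linarith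
  simp only [tpoly, Finset.sum_range_succ, Finset.prod_range_succ, Finset.range_zero,
    Finset.sum_empty, Finset.prod_empty, Nat.factorial]
  push_cast
  field_simp
  ring

lemma Ebound (p : ℝ) (hp : 0 < p) :
    ∃ C : ℝ, 0 ≤ C ∧ ∀ u : ℝ, 0 < u → u ≤ 1/3 →
      |u^2 * (-2*(2 + (1+(-u))^p + (1+u)^p))
        + u * (8*((1+u)^(p+1) - (1+(-u))^(p+1))/(p+1))
        + (-8*((1+u)^(p+2) - 2 + (1+(-u))^(p+2))/((p+2)*(p+1)))| ≤ C * u^6 := by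
  obtain ⟨M1, hM10, hM1⟩ := taylor_bound p 3
  obtain ⟨M2, hM20, hM2⟩ := taylor_bound (p+1) 4
  obtain ⟨M3, hM30, hM3⟩ := taylor_bound (p+2) 5
  have h1 : (0:ℝ) < p + 1 := by linarith
  have h2 : (0:ℝ) < p + 2 := by linarith
  refine ⟨4*M1 + 16/(p+1)*M2 + 16/((p+2)*(p+1))*M3, by positivity, ?_⟩
  intro u hu hu3
  have hau : |u| ≤ 1/3 := by rw [abs_of_pos hu]; exact hu3
  have hanu : |(-u)| ≤ 1/3 := by rwa [abs_neg]
  have e1 := hM1 u hau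
  have e1' := hM1 (-u) hanu
  have e2 := hM2 u hau
  have e2' := hM2 (-u) hanu
  have e3 := hM3 u hau
  have e3' := hM3 (-u) hanu
  rw [abs_of_pos hu] at e1 e2 e3
  rw [abs_neg, abs_of_pos hu] at e1' e2' e3'
  rw [keyE p hp u]
  calc |(-2*u^2*(((1+u)^p - tpoly p 3 u) + ((1+(-u))^p - tpoly p 3 (-u)))
      + 8/(p+1)*u*(((1+u)^(p+1) - tpoly (p+1) 4 u) - ((1+(-u))^(p+1) - tpoly (p+1) 4 (-u))))
      - 8/((p+2)*(p+1))*(((1+u)^(p+2) - tpoly (p+2) 5 u) + ((1+(-u))^(p+2) - tpoly (p+2) 5 (-u)))|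
      ≤ |(-2*u^2*(((1+u)^p - tpoly p 3 u) + ((1+(-u))^p - tpoly p 3 (-u)))
      + 8/(p+1)*u*(((1+u)^(p+1) - tpoly (p+1) 4 u) - ((1+(-u))^(p+1) - tpoly (p+1) 4 (-u))))|
      + |8/((p+2)*(p+1))*(((1+u)^(p+2) - tpoly (p+2) 5 u) + ((1+(-u))^(p+2) - tpoly (p+2) 5 (-u)))| :=
        abs_sub _ _
    _ ≤ (|(-2*u^2*(((1+u)^p - tpoly p 3 u) + ((1+(-u))^p - tpoly p 3 (-u))))|
        + |8/(p+1)*u*(((1+u)^(p+1) - tpoly (p+1) 4 u) - ((1+(-u))^(p+1) - tpoly (p+1) 4 (-u)))|)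
      + |8/((p+2)*(p+1))*(((1+u)^(p+2) - tpoly (p+2) 5 u) + ((1+(-u))^(p+2) - tpoly (p+2) 5 (-u)))| := by
        gcongr
        exact abs_add_le _ _
    _ ≤ (2*u^2*(M1*u^4 + M1*u^4) + 8/(p+1)*u*(M2*u^5 + M2*u^5))
        + 8/((p+2)*(p+1))*(M3*u^6 + M3*u^6) := by
        gcongr ?_ + ?_ + ?_
        · rw [abs_mul, abs_mul]
          have : |(-2:ℝ)| = 2 := by norm_num
          rw [this, abs_of_nonneg (sq_nonneg u)]
          gcongr
          calc |((1+u)^p - tpoly p 3 u) + ((1+(-u))^p - tpoly p 3 (-u))|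
              ≤ |(1+u)^p - tpoly p 3 u| + |(1+(-u))^p - tpoly p 3 (-u)| := abs_add_le _ _
            _ ≤ M1*u^4 + M1*u^4 := add_le_add e1 e1'
        · rw [abs_mul, abs_mul]
          have h8 : |(8:ℝ)/(p+1)| = 8/(p+1) := abs_of_pos (by positivity)
          rw [h8, abs_of_pos hu]
          gcongr
          calc |((1+u)^(p+1) - tpoly (p+1) 4 u) - ((1+(-u))^(p+1) - tpoly (p+1) 4 (-u))|
              ≤ |(1+u)^(p+1) - tpoly (p+1) 4 u| + |(1+(-u))^(p+1) - tpoly (p+1) 4 (-u)| := abs_sub _ _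
            _ ≤ M2*u^5 + M2*u^5 := add_le_add e2 e2'
        · rw [abs_mul]
          have h8 : |(8:ℝ)/((p+2)*(p+1))| = 8/((p+2)*(p+1)) := abs_of_pos (by positivity)
          rw [h8]
          gcongr
          calc |((1+u)^(p+2) - tpoly (p+2) 5 u) + ((1+(-u))^(p+2) - tpoly (p+2) 5 (-u))|
              ≤ |(1+u)^(p+2) - tpoly (p+2) 5 u| + |(1+(-u))^(p+2) - tpoly (p+2) 5 (-u)| := abs_add_le _ _
            _ ≤ M3*u^6 + M3*u^6 := add_le_add e3 e3'
    _ = (4*M1 + 16/(p+1)*M2 + 16/((p+2)*(p+1))*M3) * u^6 := by ring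

lemma gH_eq (H : ℝ) (hH0 : 0 < H) (ς : ℕ) (hς : 3 ≤ ς) :
    gH H ς = (ς:ℝ)^(2*H-4) * (ς:ℝ)^(6:ℕ) *
      ((ς:ℝ)⁻¹^2 * (-2*(2 + (1+(-(ς:ℝ)⁻¹))^(2*H) + (1+(ς:ℝ)⁻¹)^(2*H)))
        + (ς:ℝ)⁻¹ * (8*((1+(ς:ℝ)⁻¹)^(2*H+1) - (1+(-(ς:ℝ)⁻¹))^(2*H+1))/(2*H+1))
        + (-8*((1+(ς:ℝ)⁻¹)^(2*H+2) - 2 + (1+(-(ς:ℝ)⁻¹))^(2*H+2))/((2*H+2)*(2*H+1)))) := by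
  have hx3 : (3:ℝ) ≤ (ς:ℝ) := by exact_mod_cast hς
  set x : ℝ := (ς:ℝ) with hxdef
  have hx0 : (0:ℝ) < x := by linarith
  have hu0 : (0:ℝ) < x⁻¹ := by positivity
  have hu3 : x⁻¹ ≤ 1/3 := by
    rw [inv_le_comm₀ hx0 (by norm_num)]
    linarith
  have h1u : (0:ℝ) ≤ 1 + x⁻¹ := by linarith
  have h1nu : (0:ℝ) ≤ 1 + (-x⁻¹) := by linarith
  have e1 : ∀ a : ℝ, (x+1)^a = x^a * (1+x⁻¹)^a := by
    intro a
    rw [← Real.mul_rpow hx0.le h1u]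
    congr 1
    field_simp
  have e2 : ∀ a : ℝ, (x-1)^a = x^a * (1+(-x⁻¹))^a := by
    intro a
    rw [← Real.mul_rpow hx0.le h1nu]
    congr 1
    field_simp
    ring
  have e3 : x^(2*H+1) = x^(2*H) * x := by
    rw [Real.rpow_add hx0, Real.rpow_one]
  have e4 : x^(2*H+2) = x^(2*H) * x^2 := by
    rw [Real.rpow_add hx0, show ((2:ℝ)) = ((2:ℕ):ℝ) by norm_num, Real.rpow_natCast]
  have e5 : x^(2*H-4) * x^(6:ℕ) = x^(2*H) * x^2 := by
    rw [← Real.rpow_natCast x 6, ← Real.rpow_add hx0, show (2*H-4 + (6:ℕ) : ℝ) = 2*H+2 by push_cast; ring, e4]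
  have hH1 : (2*H+1) ≠ 0 := by linarith
  have hH2 : (2*H+2) ≠ 0 := by linarith
  unfold gH h1 h2 h3
  rw [e1 (2*H), e1 (2*H+1), e1 (2*H+2), e2 (2*H), e2 (2*H+1), e2 (2*H+2), e3, e4, e5]
  field_simp
  ring

theorem stmt14 (H : ℝ) (hH : H ∈ Set.Ioo (0 : ℝ) 1) :
    (∃ C : ℝ, ∀ ς : ℕ, 3 ≤ ς → |gH H ς| ≤ C * (ς : ℝ) ^ (2 * H - 4)) ∧
      Summable (fun ς : ℕ => |gH H ς|) := by
  obtain ⟨hH0, hH1⟩ := hH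
  obtain ⟨C, hC0, hC⟩ := Ebound (2*H) (by linarith)
  have main : ∀ ς : ℕ, 3 ≤ ς → |gH H ς| ≤ C * (ς : ℝ) ^ (2 * H - 4) := by
    intro ς hς
    have hx3 : (3:ℝ) ≤ (ς:ℝ) := by exact_mod_cast hς
    have hx0 : (0:ℝ) < (ς:ℝ) := by linarith
    have hu0 : (0:ℝ) < (ς:ℝ)⁻¹ := by positivity
    have hu3 : (ς:ℝ)⁻¹ ≤ 1/3 := by
      rw [inv_le_comm₀ hx0 (by norm_num)]
      linarith
    have hE := hC ((ς:ℝ)⁻¹) hu0 hu3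
    rw [gH_eq H hH0 ς hς, abs_mul, abs_mul]
    have hpos1 : (0:ℝ) < (ς:ℝ)^(2*H-4) := Real.rpow_pos_of_pos hx0 _
    have hpos2 : (0:ℝ) < ((ς:ℝ):ℝ)^(6:ℕ) := by positivity
    rw [abs_of_pos hpos1, abs_of_pos hpos2]
    calc (ς:ℝ)^(2*H-4) * (ς:ℝ)^(6:ℕ) * |_| ≤ (ς:ℝ)^(2*H-4) * (ς:ℝ)^(6:ℕ) * (C * ((ς:ℝ)⁻¹)^6) := by
          gcongr
      _ = C * (ς:ℝ)^(2*H-4) * ((ς:ℝ) * (ς:ℝ)⁻¹)^6 := by ring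
      _ = C * (ς:ℝ)^(2*H-4) := by rw [mul_inv_cancel₀ hx0.ne']; ring
  refine ⟨⟨C, main⟩, ?_⟩
  rw [← summable_nat_add_iff 3]
  apply Summable.of_nonneg_of_le (fun n => abs_nonneg _)
    (fun n => main (n+3) (by omega))
  have hs : Summable (fun n : ℕ => ((n:ℝ))^(2*H-4)) :=
    Real.summable_nat_rpow.mpr (by linarith)
  exact ((summable_nat_add_iff 3).mpr hs).mul_left C
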